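/- Let Ω ⊆ ℝ^N be a Lebesgue-measurable set, let p₁, …, p_N: Ω → ℝ be measurable with 1 < p⁻ ≤ p_i(x) ≤ p⁺ < ∞ a.e. for all i, and let a = (a_1, …, a_N): Ω × ℝ × ℝ^N → ℝ^N satisfy the growth condition |a_i(x,s,ξ)| ≤ â_i(|s|)·((Σ_{j=1}^N |ξ_j|^{p_j(x)})^{1/p_i'(x)} + c_i(x)) with â_i: [0,∞) → (0,∞) continuous and nondecreasing and c_i ≥ 0 measurable, and the coercivity condition a(x,s,ξ)·ξ ≥ α Σ_{i=1}^N |ξ_i|^{p_i(x)} with α > 0. Then for every M > 0 and every ε ∈ (0, α) there is a constant C ≥ 0, depending only on ε, N, α, p⁻, p⁺ and max_i â_i(M), such that for a.e. x ∈ Ω, all s ∈ ℝ with |s| ≤ M, and all ξ, η ∈ ℝ^N: a(x,s,ξ)·(ξ − η) ≥ (α − ε) Σ_{i=1}^N |ξ_i|^{p_i(x)} − C (Σ_{i=1}^N |η_i|^{p_i(x)} + Σ_{i=1}^N c_i(x)^{p_i'(x)}). -/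

import Mathlib

open MeasureTheory Filter ENNReal

/-- The conjugate exponent `q' = q / (q - 1)`. -/
noncomputable def conjExp (q : ℝ) : ℝ := q / (q - 1)

lemma conjExp_isConj {p : ℝ} (hp : 1 < p) : p.HolderConjugate (conjExp p) :=
  Real.HolderConjugate.conjExponent hp

lemma conjExp_le_conjExp {pm p : ℝ} (hpm : 1 < pm) (h : pm ≤ p) : conjExp p ≤ conjExp pm := by
  unfold conjExp
  rw [div_le_div_iff₀ (by linarith) (by linarith)]
  nlinarith

lemma young_eps {p q A B δ : ℝ} (hpq : Real.HolderConjugate p q) (hA : 0 ≤ A) (hB : 0 ≤ B)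
    (hδ : 0 < δ) : A * B ≤ δ * A ^ p + δ ^ (1 - q) * B ^ q := by
  have hp0 : p ≠ 0 := hpq.ne_zero
  have hq0 : q ≠ 0 := hpq.symm.ne_zero
  have hd1 : (0:ℝ) ≤ δ ^ (1/p) := Real.rpow_nonneg hδ.le _
  have hd2 : (0:ℝ) ≤ δ ^ (-(1/p)) := Real.rpow_nonneg hδ.le _
  have key := Real.young_inequality_of_nonneg (mul_nonneg hd1 hA) (mul_nonneg hd2 hB) hpq
  have e0 : (δ ^ (1/p) * A) * (δ ^ (-(1/p)) * B) = A * B := by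
    rw [mul_mul_mul_comm, ← Real.rpow_add hδ]
    simp
  have e1 : (δ ^ (1/p) * A) ^ p = δ * A ^ p := by
    rw [Real.mul_rpow hd1 hA, ← Real.rpow_mul hδ.le, one_div_mul_cancel hp0, Real.rpow_one]
  have hexp : -(1/p) * q = 1 - q := by
    have h2 := hpq.inv_add_inv_eq_one
    field_simp at h2 ⊢
    linarith
  have e2 : (δ ^ (-(1/p)) * B) ^ q = δ ^ (1 - q) * B ^ q := by
    rw [Real.mul_rpow hd2 hB, ← Real.rpow_mul hδ.le, hexp]
  rw [e0, e1, e2] at key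
  have h1 : δ * A ^ p / p ≤ δ * A ^ p :=
    div_le_self (mul_nonneg hδ.le (Real.rpow_nonneg hA _)) hpq.lt.le
  have h2 : δ ^ (1 - q) * B ^ q / q ≤ δ ^ (1 - q) * B ^ q :=
    div_le_self (mul_nonneg (Real.rpow_nonneg hδ.le _) (Real.rpow_nonneg hB _))
      hpq.symm.lt.le
  linarith

/-- Per-index estimate. Here `e = |η i|`, `S = Σ |ξ j|^{p j}`, `A = âᵢ(M)`, `c = cᵢ(x)`. -/
lemma per_index {p pm pM δ A S c e : ℝ} (hpm : 1 < pm) (hp1 : pm ≤ p) (hp2 : p ≤ pM)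
    (hδ0 : 0 < δ) (hδ1 : δ ≤ 1) (hA : 0 < A) (hS : 0 ≤ S) (hc : 0 ≤ c) (he : 0 ≤ e) :
    A * (S ^ (1 / conjExp p) + c) * e ≤
      δ * S + (δ ^ (1 - pM) * max A 1 ^ pM + 1) * e ^ p
        + max A 1 ^ conjExp pm * c ^ conjExp p := by
  have hp : 1 < p := lt_of_lt_of_le hpm hp1
  have hpq : p.HolderConjugate (conjExp p) := conjExp_isConj hp
  have hqp : (conjExp p).HolderConjugate p := hpq.symm
  set q := conjExp p with hqdef
  have hq1 : 1 < q := hqp.lt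
  have hSq : (0:ℝ) ≤ S ^ (1/q) := Real.rpow_nonneg hS _
  have hAe : (0:ℝ) ≤ A * e := mul_nonneg hA.le he
  have hK1 : (1:ℝ) ≤ max A 1 := le_max_right _ _
  have hK0 : (0:ℝ) ≤ max A 1 := by linarith
  -- first term
  have t1 : S ^ (1/q) * (A * e) ≤ δ * (S ^ (1/q)) ^ q + δ ^ (1 - p) * (A * e) ^ p :=
    young_eps hqp hSq hAe hδ0
  have eS : (S ^ (1/q)) ^ q = S := by
    rw [← Real.rpow_mul hS, one_div_mul_cancel hqp.ne_zero, Real.rpow_one]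
  have hδexp : δ ^ (1 - p) ≤ δ ^ (1 - pM) :=
    Real.rpow_le_rpow_of_exponent_ge hδ0 hδ1 (by linarith)
  have hApow : (A * e) ^ p ≤ max A 1 ^ pM * e ^ p := by
    rw [Real.mul_rpow hA.le he]
    have h1 : A ^ p ≤ max A 1 ^ p := Real.rpow_le_rpow hA.le (le_max_left _ _) (by linarith)
    have h2 : max A 1 ^ p ≤ max A 1 ^ pM := Real.rpow_le_rpow_of_exponent_le hK1 (by linarith)
    exact mul_le_mul (h1.trans h2) le_rfl (Real.rpow_nonneg he _) (Real.rpow_nonneg hK0 _)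
  have t1' : S ^ (1/q) * (A * e) ≤ δ * S + δ ^ (1 - pM) * (max A 1 ^ pM * e ^ p) := by
    calc S ^ (1/q) * (A * e) ≤ δ * (S ^ (1/q)) ^ q + δ ^ (1 - p) * (A * e) ^ p := t1
      _ ≤ δ * S + δ ^ (1 - pM) * (max A 1 ^ pM * e ^ p) := by
          rw [eS]
          gcongr
  -- second term
  have t2 := Real.young_inequality_of_nonneg (mul_nonneg hA.le hc) he hqp
  have hAc : (A * c) ^ q ≤ max A 1 ^ conjExp pm * c ^ q := by
    rw [Real.mul_rpow hA.le hc]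
    have h1 : A ^ q ≤ max A 1 ^ q := Real.rpow_le_rpow hA.le (le_max_left _ _) (by linarith)
    have h2 : max A 1 ^ q ≤ max A 1 ^ conjExp pm :=
      Real.rpow_le_rpow_of_exponent_le hK1 (conjExp_le_conjExp hpm hp1)
    exact mul_le_mul (h1.trans h2) le_rfl (Real.rpow_nonneg hc _) (Real.rpow_nonneg hK0 _)
  have t2' : (A * c) * e ≤ max A 1 ^ conjExp pm * c ^ q + e ^ p := by
    have d1 : (A * c) ^ q / q ≤ (A * c) ^ q :=
      div_le_self (Real.rpow_nonneg (mul_nonneg hA.le hc) _) hq1.le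
    have d2 : e ^ p / p ≤ e ^ p := div_le_self (Real.rpow_nonneg he _) hp.le
    linarith
  calc A * (S ^ (1/q) + c) * e = S ^ (1/q) * (A * e) + (A * c) * e := by ring
    _ ≤ (δ * S + δ ^ (1 - pM) * (max A 1 ^ pM * e ^ p))
        + (max A 1 ^ conjExp pm * c ^ q + e ^ p) := add_le_add t1' t2'
    _ = δ * S + (δ ^ (1 - pM) * max A 1 ^ pM + 1) * e ^ p
        + max A 1 ^ conjExp pm * c ^ q := by ring

/-- the Young-inequality estimate used in Step 5 of the paper:
under the growth and coercivity conditions on `a`, for every `M > 0` and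
`ε ∈ (0, α)` there is a constant `C ≥ 0` such that for a.e. `x`, all `|s| ≤ M` and
all `ξ, η`:
`a(x,s,ξ)·(ξ − η) ≥ (α − ε) Σᵢ |ξᵢ|^{pᵢ(x)} − C (Σᵢ |ηᵢ|^{pᵢ(x)} + Σᵢ cᵢ(x)^{pᵢ'(x)})`. -/
theorem stmt_11 {N : ℕ} (Ω : Set (Fin N → ℝ)) (hΩ : MeasurableSet Ω)
    (p : Fin N → (Fin N → ℝ) → ℝ) (hp : ∀ i, Measurable (p i))
    (pm pM : ℝ) (hpm : 1 < pm)
    (hpb : ∀ᵐ x ∂(volume.restrict Ω), ∀ i, pm ≤ p i x ∧ p i x ≤ pM)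
    (a : (Fin N → ℝ) → ℝ → (Fin N → ℝ) → (Fin N → ℝ))
    (ha_meas : ∀ (s : ℝ) (ξ : Fin N → ℝ), Measurable (fun x => a x s ξ))
    (ahat : Fin N → ℝ → ℝ) (hahat_cont : ∀ i, Continuous (ahat i))
    (hahat_mono : ∀ i, MonotoneOn (ahat i) (Set.Ici 0))
    (hahat_pos : ∀ i, ∀ t : ℝ, 0 ≤ t → 0 < ahat i t)
    (c : Fin N → (Fin N → ℝ) → ℝ) (hc_meas : ∀ i, Measurable (c i))
    (hc_nonneg : ∀ i, ∀ᵐ x ∂(volume.restrict Ω), 0 ≤ c i x)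
    (hgrowth : ∀ᵐ x ∂(volume.restrict Ω), ∀ (s : ℝ) (ξ : Fin N → ℝ) (i : Fin N),
      |a x s ξ i| ≤ ahat i |s| *
        ((∑ j, |ξ j| ^ p j x) ^ (1 / conjExp (p i x)) + c i x))
    (α : ℝ) (hα : 0 < α)
    (hcoer : ∀ᵐ x ∂(volume.restrict Ω), ∀ (s : ℝ) (ξ : Fin N → ℝ),
      α * ∑ i, |ξ i| ^ p i x ≤ ∑ i, a x s ξ i * ξ i)
    (M ε : ℝ) (hM : 0 < M) (hε : 0 < ε) (hεα : ε < α) :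
    ∃ C : ℝ, 0 ≤ C ∧ ∀ᵐ x ∂(volume.restrict Ω), ∀ s : ℝ, |s| ≤ M →
      ∀ ξ η : Fin N → ℝ,
        (α - ε) * (∑ i, |ξ i| ^ p i x) -
            C * ((∑ i, |η i| ^ p i x) + ∑ i, c i x ^ conjExp (p i x)) ≤
          ∑ i, a x s ξ i * (ξ i - η i) := by
  rcases Nat.eq_zero_or_pos N with hN | hN
  · subst hN
    exact ⟨0, le_rfl, Filter.Eventually.of_forall (by intro x s hs ξ η; simp)⟩
  have hN0 : (0:ℝ) < N := by exact_mod_cast hN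
  set δ : ℝ := min (ε / N) 1 with hδdef
  have hδ0 : 0 < δ := lt_min (div_pos hε hN0) one_pos
  have hδ1 : δ ≤ 1 := min_le_right _ _
  have hNδ : (N:ℝ) * δ ≤ ε := by
    have h1 : δ ≤ ε / N := min_le_left _ _
    have := mul_le_mul_of_nonneg_left h1 hN0.le
    calc (N:ℝ) * δ ≤ N * (ε / N) := this
      _ = ε := by field_simp
  set A : Fin N → ℝ := fun i => ahat i M with hAdef
  have hA : ∀ i, 0 < A i := fun i => hahat_pos i M hM.le
  set K : Fin N → ℝ := fun i => max (A i) 1 with hKdef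
  have hK0 : ∀ i, (0:ℝ) ≤ K i := fun i => le_trans zero_le_one (le_max_right _ _)
  set C : ℝ := ∑ i, (δ ^ (1 - pM) * K i ^ pM + 1 + K i ^ conjExp pm) with hCdef
  have hterm : ∀ i, (0:ℝ) ≤ δ ^ (1 - pM) * K i ^ pM + 1 + K i ^ conjExp pm := fun i =>
    add_nonneg (add_nonneg (mul_nonneg (Real.rpow_nonneg hδ0.le _)
      (Real.rpow_nonneg (hK0 i) _)) zero_le_one) (Real.rpow_nonneg (hK0 i) _)
  have hC : 0 ≤ C := Finset.sum_nonneg fun i _ => hterm i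
  have hle : ∀ i, δ ^ (1 - pM) * K i ^ pM + 1 + K i ^ conjExp pm ≤ C := fun i =>
    Finset.single_le_sum (fun j _ => hterm j) (Finset.mem_univ i)
  have hCi1 : ∀ i, δ ^ (1 - pM) * K i ^ pM + 1 ≤ C := fun i => by
    have := hle i
    have := Real.rpow_nonneg (hK0 i) (conjExp pm)
    linarith
  have hCi2 : ∀ i, K i ^ conjExp pm ≤ C := fun i => by
    have := hle i
    have h1 := Real.rpow_nonneg hδ0.le (1 - pM)
    have h2 := Real.rpow_nonneg (hK0 i) pM
    nlinarith
  refine ⟨C, hC, ?_⟩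
  filter_upwards [hpb, hgrowth, hcoer, ae_all_iff.2 hc_nonneg] with x hpx hgx hcox hcx
  intro s hsM ξ η
  set S : ℝ := ∑ j, |ξ j| ^ p j x with hSdef
  have hS : 0 ≤ S := Finset.sum_nonneg fun j _ => Real.rpow_nonneg (abs_nonneg _) _
  have hahatM : ∀ i, ahat i |s| ≤ A i := fun i =>
    hahat_mono i (Set.mem_Ici.2 (abs_nonneg s)) (Set.mem_Ici.2 hM.le) hsM
  have hmain : ∀ i, a x s ξ i * η i ≤
      δ * S + (δ ^ (1 - pM) * K i ^ pM + 1) * |η i| ^ p i x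
        + K i ^ conjExp pm * c i x ^ conjExp (p i x) := by
    intro i
    have h1 : a x s ξ i * η i ≤ |a x s ξ i| * |η i| := by
      calc a x s ξ i * η i ≤ |a x s ξ i * η i| := le_abs_self _
        _ = |a x s ξ i| * |η i| := abs_mul _ _
    have h2 : |a x s ξ i| ≤ A i * (S ^ (1 / conjExp (p i x)) + c i x) :=
      (hgx s ξ i).trans (mul_le_mul_of_nonneg_right (hahatM i)
        (add_nonneg (Real.rpow_nonneg hS _) (hcx i)))
    have h3 : |a x s ξ i| * |η i| ≤ A i * (S ^ (1 / conjExp (p i x)) + c i x) * |η i| :=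
      mul_le_mul_of_nonneg_right h2 (abs_nonneg _)
    exact h1.trans (h3.trans (per_index hpm (hpx i).1 (hpx i).2 hδ0 hδ1 (hA i) hS (hcx i)
      (abs_nonneg _)))
  have hsum1 : ∑ i, a x s ξ i * η i ≤
      (N:ℝ) * (δ * S) + C * (∑ i, |η i| ^ p i x) + C * (∑ i, c i x ^ conjExp (p i x)) := by
    calc ∑ i, a x s ξ i * η i
        ≤ ∑ i, (δ * S + (δ ^ (1 - pM) * K i ^ pM + 1) * |η i| ^ p i x
            + K i ^ conjExp pm * c i x ^ conjExp (p i x)) :=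
          Finset.sum_le_sum fun i _ => hmain i
      _ = (N:ℝ) * (δ * S) + (∑ i, (δ ^ (1 - pM) * K i ^ pM + 1) * |η i| ^ p i x)
            + ∑ i, K i ^ conjExp pm * c i x ^ conjExp (p i x) := by
          rw [Finset.sum_add_distrib, Finset.sum_add_distrib, Finset.sum_const,
            Finset.card_univ, Fintype.card_fin, nsmul_eq_mul]
      _ ≤ (N:ℝ) * (δ * S) + C * (∑ i, |η i| ^ p i x)
            + C * (∑ i, c i x ^ conjExp (p i x)) := by
          gcongr with i _ i _
          · rw [Finset.mul_sum]
            exact Finset.sum_le_sum fun i _ =>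
              mul_le_mul_of_nonneg_right (hCi1 i) (Real.rpow_nonneg (abs_nonneg _) _)
          · rw [Finset.mul_sum]
            exact Finset.sum_le_sum fun i _ =>
              mul_le_mul_of_nonneg_right (hCi2 i) (Real.rpow_nonneg (hcx i) _)
  have hcoerx : α * S ≤ ∑ i, a x s ξ i * ξ i := hcox s ξ
  have hsplit : ∑ i, a x s ξ i * (ξ i - η i)
      = ∑ i, a x s ξ i * ξ i - ∑ i, a x s ξ i * η i := by
    rw [← Finset.sum_sub_distrib]
    exact Finset.sum_congr rfl fun i _ => mul_sub _ _ _
  have hNδS : (N:ℝ) * (δ * S) ≤ ε * S := by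
    have := mul_le_mul_of_nonneg_right hNδ hS
    nlinarith
  have hCd : C * ((∑ i, |η i| ^ p i x) + ∑ i, c i x ^ conjExp (p i x))
      = C * (∑ i, |η i| ^ p i x) + C * (∑ i, c i x ^ conjExp (p i x)) := mul_add _ _ _
  rw [hsplit]
  have hS' : (α - ε) * S = α * S - ε * S := by ring
  linarith
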